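/- Let E be a finite measure space, (a_k) a sequence of measurable functions converging almost everywhere to a, with |a_k| ≤ C uniformly, and (b_k) a sequence converging weakly in L²(E) to b. Then a_k·b_k converges weakly in L²(E) to a·b. -/

import Mathlib

open MeasureTheory Filter

lemma integrable_mul_of_memL2 {E : Type*} [MeasurableSpace E] {μ : Measure E} {f g : E → ℝ}
    (hf : MemLp f 2 μ) (hg : MemLp g 2 μ) : Integrable (fun x => f x * g x) μ := by
  have h := L2.integrable_inner (𝕜 := ℝ) (hf.toLp f) (hg.toLp g)
  refine h.congr ?_
  filter_upwards [hf.coeFn_toLp, hg.coeFn_toLp] with x h1 h2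
  simp [h1, h2, RCLike.inner_apply, mul_comm]

theorem product_weak_L2_convergence
    {E : Type*} [MeasurableSpace E] (μ : Measure E) [IsFiniteMeasure μ]
    (a : ℕ → E → ℝ) (alim : E → ℝ) (b : ℕ → E → ℝ) (blim : E → ℝ) (C : ℝ)
    (ha_meas : ∀ k, Measurable (a k)) (halim_meas : Measurable alim)
    (hb_mem : ∀ k, MemLp (b k) 2 μ) (hblim_mem : MemLp blim 2 μ)
    (ha_bound : ∀ k, ∀ x, |a k x| ≤ C)
    (ha_ae : ∀ᵐ x ∂μ, Tendsto (fun k => a k x) atTop (nhds (alim x)))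
    (hb_weak : ∀ φ : E → ℝ, MemLp φ 2 μ →
      Tendsto (fun k => ∫ x, b k x * φ x ∂μ) atTop (nhds (∫ x, blim x * φ x ∂μ))) :
    ∀ φ : E → ℝ, MemLp φ 2 μ →
      Tendsto (fun k => ∫ x, a k x * b k x * φ x ∂μ) atTop
        (nhds (∫ x, alim x * blim x * φ x ∂μ)) := by
  intro φ hφ
  set C' : ℝ := |C| with hC'
  have hC'0 : 0 ≤ C' := abs_nonneg C
  have ha_bound' : ∀ k x, |a k x| ≤ C' := fun k x => (ha_bound k x).trans (le_abs_self C)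
  have halim_bd : ∀ᵐ x ∂μ, |alim x| ≤ C' := by
    filter_upwards [ha_ae] with x hx
    exact le_of_tendsto hx.abs (Eventually.of_forall fun k => ha_bound' k x)
  -- alim * φ ∈ L²
  have hφa : MemLp (fun x => alim x * φ x) 2 μ := by
    refine MemLp.of_le_mul (c := C') hφ ((halim_meas.aestronglyMeasurable).mul hφ.1) ?_
    filter_upwards [halim_bd] with x hx
    simp only [norm_mul, Real.norm_eq_abs]
    exact mul_le_mul_of_nonneg_right hx (abs_nonneg _)
  -- (a k - alim) * φ ∈ L²
  have hdk : ∀ k, MemLp (fun x => (a k x - alim x) * φ x) 2 μ := by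
    intro k
    refine MemLp.of_le_mul (c := 2 * C') hφ
      ((((ha_meas k).sub halim_meas).aestronglyMeasurable).mul hφ.1) ?_
    filter_upwards [halim_bd] with x hx
    simp only [norm_mul, Real.norm_eq_abs]
    refine mul_le_mul_of_nonneg_right ?_ (abs_nonneg _)
    calc |a k x - alim x| ≤ |a k x| + |alim x| := abs_sub _ _
      _ ≤ C' + C' := add_le_add (ha_bound' k x) hx
      _ = 2 * C' := by ring
  -- decomposition of integrals
  have hdecomp : ∀ k, (∫ x, a k x * b k x * φ x ∂μ) =
      (∫ x, b k x * (alim x * φ x) ∂μ) + ∫ x, b k x * ((a k x - alim x) * φ x) ∂μ := by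
    intro k
    rw [← integral_add (integrable_mul_of_memL2 (hb_mem k) hφa)
      (integrable_mul_of_memL2 (hb_mem k) (hdk k))]
    congr 1; funext x; ring
  have hlim_eq : (∫ x, alim x * blim x * φ x ∂μ) = ∫ x, blim x * (alim x * φ x) ∂μ := by
    congr 1; funext x; ring
  rw [hlim_eq]
  have h1 : Tendsto (fun k => ∫ x, b k x * (alim x * φ x) ∂μ) atTop
      (nhds (∫ x, blim x * (alim x * φ x) ∂μ)) := hb_weak _ hφa
  -- second term tends to 0
  -- Lp elements
  set B : ℕ → Lp ℝ 2 μ := fun k => (hb_mem k).toLp (b k) with hB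
  set D : ℕ → Lp ℝ 2 μ := fun k => (hdk k).toLp _ with hD
  have hinner : ∀ (k : ℕ) (f : Lp ℝ 2 μ), (inner ℝ (B k) f : ℝ) = ∫ x, b k x * f x ∂μ := by
    intro k f
    rw [L2.inner_def]
    refine integral_congr_ae ?_
    filter_upwards [(hb_mem k).coeFn_toLp] with x hx
    simp [hx, RCLike.inner_apply]
    rw [mul_comm]; exact congrArg (· * _) hx
  -- Banach–Steinhaus: ∃ M, ∀ k, ‖B k‖ ≤ M
  obtain ⟨M, hM⟩ : ∃ M, ∀ k, ‖B k‖ ≤ M := by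
    have hbs := banach_steinhaus (𝕜 := ℝ) (g := fun k => innerSL ℝ (B k)) ?_
    · obtain ⟨M, hM⟩ := hbs
      exact ⟨M, fun k => by simpa [innerSL_apply_norm] using hM k⟩
    · intro f
      have hconv := hb_weak f (Lp.memLp f)
      have h2 : Tendsto (fun k => ‖(innerSL ℝ (B k)) f‖) atTop
          (nhds ‖∫ x, blim x * f x ∂μ‖) := by
        refine Tendsto.norm ?_
        simpa only [innerSL_apply_apply, hinner] using hconv
      obtain ⟨M0, hM0⟩ := h2.bddAbove_range
      exact ⟨M0, fun k => hM0 ⟨k, rfl⟩⟩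
  -- ‖D k‖ → 0 via dominated convergence
  have hDnorm : Tendsto (fun k => ‖D k‖) atTop (nhds 0) := by
    have hint : Tendsto (fun k => ∫ x, ((a k x - alim x) * φ x) ^ 2 ∂μ) atTop (nhds 0) := by
      have hmeas : ∀ k, AEStronglyMeasurable (fun x => ((a k x - alim x) * φ x) ^ 2) μ := by
        intro k
        have h := (((ha_meas k).sub halim_meas).aestronglyMeasurable).mul hφ.1
        exact (h.mul h).congr (Eventually.of_forall fun x => (sq _).symm)
      have hbd_int : Integrable (fun x => (2 * C') ^ 2 * φ x ^ 2) μ := by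
        refine ((integrable_mul_of_memL2 hφ hφ).const_mul ((2 * C') ^ 2)).congr ?_
        exact Eventually.of_forall fun x => by ring
      have h0 : (0 : ℝ) = ∫ x, (0 : ℝ) ∂μ := by simp
      rw [h0]
      refine tendsto_integral_of_dominated_convergence _ hmeas hbd_int ?_ ?_
      · intro k
        filter_upwards [halim_bd] with x hx
        have h1 : |a k x - alim x| ≤ 2 * C' := by
          calc |a k x - alim x| ≤ |a k x| + |alim x| := abs_sub _ _
            _ ≤ C' + C' := add_le_add (ha_bound' k x) hx
            _ = 2 * C' := by ring
        rw [Real.norm_eq_abs, abs_of_nonneg (sq_nonneg _), mul_pow]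
        have h2 : (a k x - alim x) ^ 2 ≤ (2 * C') ^ 2 := by
          rw [← sq_abs]
          exact pow_le_pow_left₀ (abs_nonneg _) h1 2
        exact mul_le_mul_of_nonneg_right h2 (sq_nonneg _)
      · filter_upwards [ha_ae] with x hx
        have ht : Tendsto (fun k => (a k x - alim x) * φ x) atTop (nhds 0) := by
          have := (hx.sub (tendsto_const_nhds (x := alim x))).mul_const (φ x)
          simpa using this
        simpa using (ht.mul ht).congr fun k => (sq _).symm
    have hsq : ∀ k, ‖D k‖ = Real.sqrt (∫ x, ((a k x - alim x) * φ x) ^ 2 ∂μ) := by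
      intro k
      have hDD : (inner ℝ (D k) (D k) : ℝ) = ∫ x, ((a k x - alim x) * φ x) ^ 2 ∂μ := by
        rw [L2.inner_def]
        refine integral_congr_ae ?_
        filter_upwards [(hdk k).coeFn_toLp] with x hx
        simp [hx, RCLike.inner_apply, sq]
        exact congrArg₂ (· * ·) hx hx
      rw [← hDD, real_inner_self_eq_norm_sq, Real.sqrt_sq (norm_nonneg _)]
    simp_rw [hsq]
    have := (Real.continuous_sqrt.tendsto 0).comp hint
    simpa [Function.comp_def] using this
  have h2 : Tendsto (fun k => ∫ x, b k x * ((a k x - alim x) * φ x) ∂μ) atTop (nhds 0) := by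
    refine squeeze_zero_norm (fun k => ?_) (by simpa using hDnorm.const_mul M)
    have heq : (∫ x, b k x * ((a k x - alim x) * φ x) ∂μ) = (inner ℝ (B k) (D k) : ℝ) := by
      rw [hinner k (D k)]
      refine integral_congr_ae ?_
      filter_upwards [(hdk k).coeFn_toLp] with x hx
      rw [hx]
    rw [heq]
    calc ‖(inner ℝ (B k) (D k) : ℝ)‖ ≤ ‖B k‖ * ‖D k‖ := norm_inner_le_norm _ _
      _ ≤ M * ‖D k‖ := mul_le_mul_of_nonneg_right (hM k) (norm_nonneg _)
  have := h1.add h2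
  simp only [add_zero] at this
  refine this.congr fun k => (hdecomp k).symm
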